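/- Let H be a complex Hilbert space, let T and S be bounded self-adjoint non-negative linear operators on H, let λ > 0, and let 0 ≤ q ≤ 1. Then T + λI and S + λI are invertible, and ‖(T + λI)^q · ((S + λI)⁻¹)^q‖ ≤ ‖(T + λI)(S + λI)⁻¹‖^q. In particular, if ‖(T + λI)(S + λI)⁻¹‖ ≤ 2 then ‖(T + λI)^q (S + λI)^{-q}‖ ≤ 2^q. -/

import Mathlib

/-- The `p`-th power of a (self-adjoint, non-negative) bounded operator on a
complex Hilbert space, via the continuous functional calculus. -/
noncomputable def opPow {H : Type*} [NormedAddCommGroup H] [InnerProductSpace ℂ H]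
    [CompleteSpace H] (T : H →L[ℂ] H) (p : ℝ) : H →L[ℂ] H :=
  cfc (fun x : ℝ => x ^ p) T


open scoped NNReal ENNReal
open ContinuousLinearMap

section SpecRad

variable {A : Type*} [NormedRing A] [NormedAlgebra ℂ A]

lemma spectralRadius_mul_comm_le (x y : A) :
    spectralRadius ℂ (x * y) ≤ spectralRadius ℂ (y * x) := by
  rw [spectralRadius, spectralRadius]
  refine iSup₂_le fun k hk => ?_
  by_cases hk0 : k = 0
  · simp [hk0]
  · have : k ∈ spectrum ℂ (y * x) :=
      (Set.ext_iff.mp (spectrum.nonzero_mul_comm x y) k |>.mp ⟨hk, hk0⟩).1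
    exact le_iSup₂ (f := fun k (_ : k ∈ spectrum ℂ (y * x)) => (‖k‖₊ : ℝ≥0∞)) k this

lemma spectralRadius_mul_comm (x y : A) :
    spectralRadius ℂ (x * y) = spectralRadius ℂ (y * x) :=
  le_antisymm (spectralRadius_mul_comm_le x y) (spectralRadius_mul_comm_le y x)

end SpecRad

section Cordes

variable {H : Type*} [NormedAddCommGroup H] [InnerProductSpace ℂ H] [CompleteSpace H]

local notation "𝔸" => H →L[ℂ] H

/-- real power of an operator -/
noncomputable abbrev opw (a : 𝔸) (t : ℝ) : 𝔸 := cfc (fun x : ℝ => x ^ t) a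

lemma opw_sa (a : 𝔸) (t : ℝ) : IsSelfAdjoint (opw a t) := cfc_predicate _ a

lemma opw_nonneg {a : 𝔸} (ha : 0 ≤ a) {t : ℝ} : 0 ≤ opw a t :=
  cfc_nonneg fun x hx => Real.rpow_nonneg (spectrum_nonneg_of_nonneg ha hx) t

lemma opw_mul {a : 𝔸} (ha : 0 ≤ a) {r s : ℝ} (hr : 0 ≤ r) (hs : 0 ≤ s) :
    opw a r * opw a s = opw a (r + s) := by
  rw [← cfc_mul _ _ a (Real.continuous_rpow_const hr).continuousOn
      (Real.continuous_rpow_const hs).continuousOn]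
  exact cfc_congr fun x hx =>
    (Real.rpow_add_of_nonneg (spectrum_nonneg_of_nonneg ha hx) hr hs).symm

lemma opw_zero {a : 𝔸} (ha : 0 ≤ a) : opw a 0 = 1 := by
  have h : (fun x : ℝ => x ^ (0 : ℝ)) = fun _ => (1 : ℝ) := funext fun x => Real.rpow_zero x
  rw [opw, h, cfc_const_one ℝ a ha.isSelfAdjoint]

lemma opw_one {a : 𝔸} (ha : 0 ≤ a) : opw a 1 = a := by
  have h : (fun x : ℝ => x ^ (1 : ℝ)) = fun x => x := funext fun x => Real.rpow_one x
  rw [opw, h, cfc_id' ℝ a ha.isSelfAdjoint]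

/-- norm bound for operator powers -/
lemma opw_norm_le {a : 𝔸} (ha : 0 ≤ a) {t : ℝ} (ht : 0 ≤ t) :
    ‖opw a t‖ ≤ max ‖a‖ 1 ^ t := by
  refine norm_cfc_le (Real.rpow_nonneg (le_max_of_le_right zero_le_one) t) fun x hx => ?_
  have hx0 : 0 ≤ x := spectrum_nonneg_of_nonneg ha hx
  rw [Real.norm_of_nonneg (Real.rpow_nonneg hx0 t)]
  refine Real.rpow_le_rpow hx0 ?_ ht
  rcases subsingleton_or_nontrivial H with hH | hH
  · haveI : Subsingleton 𝔸 := ⟨fun f g => ContinuousLinearMap.ext fun x => Subsingleton.elim _ _⟩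
    exact absurd (isUnit_of_subsingleton _) hx
  · haveI : NormOneClass 𝔸 := ⟨by rw [ContinuousLinearMap.one_def]; exact norm_id⟩
    exact le_max_of_le_left ((le_abs_self x).trans
      ((Real.norm_eq_abs x) ▸ spectrum.norm_le_norm_of_mem hx))

end Cordes

section Key

variable {H : Type*} [NormedAddCommGroup H] [InnerProductSpace ℂ H] [CompleteSpace H]
  [Nontrivial H]

local notation "𝔸" => H →L[ℂ] H

noncomputable def srad (x : 𝔸) : ℝ := (spectralRadius ℂ x).toReal

lemma srad_comm (x y : 𝔸) : srad (x * y) = srad (y * x) := by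
  rw [srad, srad, spectralRadius_mul_comm]

lemma norm_eq_srad {x : 𝔸} (hx : IsSelfAdjoint x) : ‖x‖ = srad x :=
  (hx.toReal_spectralRadius_complex_eq_norm).symm

lemma srad_le_norm (x : 𝔸) : srad x ≤ ‖x‖ := by
  haveI : NormOneClass 𝔸 := ⟨by rw [ContinuousLinearMap.one_def]; exact norm_id⟩
  have h := spectrum.spectralRadius_le_nnnorm (𝕜 := ℂ) x
  have := ENNReal.toReal_mono ENNReal.coe_ne_top h
  simpa [srad] using this

lemma key_sq {a b : 𝔸} (ha : 0 ≤ a) (hb : 0 ≤ b) {r s : ℝ} (hr : 0 ≤ r) (hs : 0 ≤ s) :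
    ‖opw a ((r + s) / 2) * opw b ((r + s) / 2)‖ ^ 2
      ≤ ‖opw a r * opw b r‖ * ‖opw a s * opw b s‖ := by
  set p := (r + s) / 2 with hp
  have hp0 : 0 ≤ p := by positivity
  have h1 : ‖opw a p * opw b p‖ ^ 2 = ‖opw b p * opw a (r + s) * opw b p‖ := by
    rw [sq, ← CStarRing.norm_star_mul_self, star_mul, (opw_sa a p).star_eq,
      (opw_sa b p).star_eq]
    congr 1
    have : opw a p * opw a p = opw a (r + s) := by
      rw [opw_mul ha hp0 hp0]; congr 1; ring
    rw [mul_assoc, ← mul_assoc (opw a p), this, mul_assoc]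
  have h2 : IsSelfAdjoint (opw b p * opw a (r + s) * opw b p) := by
    have := (opw_sa a (r + s)).conjugate (opw b p)
    rwa [(opw_sa b p).star_eq] at this
  calc ‖opw a p * opw b p‖ ^ 2
      = srad (opw b p * (opw a (r + s) * opw b p)) := by
        rw [h1, norm_eq_srad h2, mul_assoc]
    _ = srad (opw a (r + s) * opw b (r + s)) := by
        rw [srad_comm, mul_assoc, opw_mul hb hp0 hp0]
        congr 2
        congr 1; rw [hp]; ring
    _ = srad (opw a r * (opw a s * opw b s * opw b r)) := by
        rw [← opw_mul ha hr hs, show r + s = s + r from add_comm r s,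
          ← opw_mul hb hs hr]
        simp only [mul_assoc]
    _ = srad ((opw a s * opw b s * opw b r) * opw a r) := srad_comm _ _
    _ ≤ ‖(opw a s * opw b s) * (opw b r * opw a r)‖ := by
        refine le_trans (le_of_eq ?_) (srad_le_norm _)
        simp only [mul_assoc]
    _ ≤ ‖opw a s * opw b s‖ * ‖opw b r * opw a r‖ := norm_mul_le _ _
    _ = ‖opw a r * opw b r‖ * ‖opw a s * opw b s‖ := by
        rw [mul_comm]
        congr 1
        rw [show opw b r * opw a r = star (opw a r * opw b r) by
          rw [star_mul, (opw_sa a r).star_eq, (opw_sa b r).star_eq], norm_star]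

lemma dyadic {a b : 𝔸} (ha : 0 ≤ a) (hb : 0 ≤ b) {M : ℝ} (hM0 : 0 < M)
    (hM : ‖a * b‖ ≤ M) :
    ∀ n k : ℕ, k ≤ 2 ^ n →
      ‖opw a ((k : ℝ) / 2 ^ n) * opw b ((k : ℝ) / 2 ^ n)‖ ≤ M ^ ((k : ℝ) / 2 ^ n) := by
  intro n
  induction n with
  | zero =>
    intro k hk
    interval_cases k
    · simp only [Nat.cast_zero, pow_zero, zero_div, Real.rpow_zero, opw_zero ha, opw_zero hb,
        mul_one]
      calc ‖(1 : 𝔸)‖ = ‖ContinuousLinearMap.id ℂ H‖ := by rw [ContinuousLinearMap.one_def]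
        _ ≤ 1 := norm_id_le
    · simp only [Nat.cast_one, pow_zero, div_one, Real.rpow_one, opw_one ha, opw_one hb]
      exact hM
  | succ n ih =>
    intro k hk
    have h2 : (2:ℕ) ^ (n+1) = 2 * 2 ^ n := by ring
    set r : ℕ := k / 2 with hrdef
    set s : ℕ := k - r with hsdef
    have hrs : r + s = k := by omega
    have hr2 : r ≤ 2 ^ n := by omega
    have hs2 : s ≤ 2 ^ n := by omega
    have hq : (k : ℝ) / 2 ^ (n+1) = ((r : ℝ) / 2 ^ n + (s : ℝ) / 2 ^ n) / 2 := by
      field_simp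
      push_cast [← hrs]
      ring
    have hkey := key_sq ha hb (r := (r : ℝ) / 2 ^ n) (s := (s : ℝ) / 2 ^ n)
      (by positivity) (by positivity)
    rw [← hq] at hkey
    have hbound : ‖opw a ((r:ℝ)/2^n) * opw b ((r:ℝ)/2^n)‖ * ‖opw a ((s:ℝ)/2^n) * opw b ((s:ℝ)/2^n)‖
        ≤ M ^ ((r:ℝ)/2^n) * M ^ ((s:ℝ)/2^n) :=
      mul_le_mul (ih r hr2) (ih s hs2) (norm_nonneg _) (Real.rpow_nonneg hM0.le _)
    have hMeq : M ^ ((r:ℝ)/2^n) * M ^ ((s:ℝ)/2^n) = (M ^ ((k:ℝ)/2^(n+1))) ^ 2 := by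
      rw [← Real.rpow_add hM0, sq, ← Real.rpow_add hM0, hq]
      ring_nf
    nlinarith [norm_nonneg (opw a ((k:ℝ)/2^(n+1)) * opw b ((k:ℝ)/2^(n+1))),
      Real.rpow_nonneg hM0.le ((k:ℝ)/2^(n+1)), hkey, hbound]

lemma cordesM {a b : 𝔸} (ha : 0 ≤ a) (hb : 0 ≤ b) {q : ℝ} (hq0 : 0 ≤ q) (hq1 : q ≤ 1)
    {M : ℝ} (hM0 : 0 < M) (hM : ‖a * b‖ ≤ M) :
    ‖opw a q * opw b q‖ ≤ M ^ q := by
  set Ca : ℝ := max ‖a‖ 1 with hCa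
  set Cb : ℝ := max ‖b‖ 1 with hCb
  have hCa0 : 0 < Ca := lt_max_of_lt_right one_pos
  have hCb0 : 0 < Cb := lt_max_of_lt_right one_pos
  set d : ℕ → ℝ := fun n => (⌊q * 2 ^ n⌋₊ : ℝ) / 2 ^ n with hd
  set t : ℕ → ℝ := fun n => q - d n with ht
  have hd0 : ∀ n, 0 ≤ d n := fun n => by positivity
  have hdq : ∀ n, d n ≤ q := fun n => by
    rw [hd, div_le_iff₀ (by positivity)]
    exact Nat.floor_le (by positivity)
  have ht0 : ∀ n, 0 ≤ t n := fun n => sub_nonneg.mpr (hdq n)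
  have htle : ∀ n, t n ≤ (1/2 : ℝ) ^ n := fun n => by
    have h1 : q * 2 ^ n < ⌊q * 2 ^ n⌋₊ + 1 := Nat.lt_floor_add_one _
    have h2 : (0:ℝ) < 2 ^ n := by positivity
    have heq : t n = q - (⌊q * 2 ^ n⌋₊ : ℝ) / 2 ^ n := rfl
    rw [heq, div_pow, one_pow, sub_le_iff_le_add, ← add_div, le_div_iff₀ h2]
    linarith [h1]
  have hbound : ∀ n : ℕ, ‖opw a q * opw b q‖ ≤ Ca ^ t n * M ^ d n * Cb ^ t n := by
    intro n
    have hkn : ⌊q * 2 ^ n⌋₊ ≤ 2 ^ n := by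
      have : q * 2 ^ n ≤ ((2 ^ n : ℕ) : ℝ) := by
        push_cast
        nlinarith [pow_pos (show (0:ℝ) < 2 by norm_num) n]
      calc ⌊q * 2 ^ n⌋₊ ≤ ⌊((2 ^ n : ℕ) : ℝ)⌋₊ := Nat.floor_le_floor this
        _ = 2 ^ n := Nat.floor_natCast _
    have hdyad : ‖opw a (d n) * opw b (d n)‖ ≤ M ^ d n := by
      have := dyadic ha hb hM0 hM n ⌊q * 2 ^ n⌋₊ hkn
      simpa [hd] using this
    have hdecomp : opw a q * opw b q = opw a (t n) * (opw a (d n) * opw b (d n)) * opw b (t n) := by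
      have h1 : opw a (t n) * opw a (d n) = opw a q := by
        rw [opw_mul ha (ht0 n) (hd0 n)]
        congr 1
        simp [ht]
      have h2 : opw b (d n) * opw b (t n) = opw b q := by
        rw [opw_mul hb (hd0 n) (ht0 n)]
        congr 1
        simp [ht]
      rw [← h1, ← h2]
      simp only [mul_assoc]
    calc ‖opw a q * opw b q‖
        ≤ ‖opw a (t n) * (opw a (d n) * opw b (d n))‖ * ‖opw b (t n)‖ := by
          rw [hdecomp]; exact norm_mul_le _ _
      _ ≤ ‖opw a (t n)‖ * ‖opw a (d n) * opw b (d n)‖ * ‖opw b (t n)‖ :=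
          mul_le_mul_of_nonneg_right (norm_mul_le _ _) (norm_nonneg _)
      _ ≤ Ca ^ t n * M ^ d n * Cb ^ t n := by
          refine mul_le_mul ?_ (opw_norm_le hb (ht0 n)) (norm_nonneg _) (by positivity)
          exact mul_le_mul (opw_norm_le ha (ht0 n)) hdyad (norm_nonneg _)
            (Real.rpow_nonneg hCa0.le _)
  -- limits
  have hcont : ∀ C : ℝ, 0 < C → Continuous (fun x : ℝ => C ^ x) := by
    intro C hC
    simp only [Real.rpow_def_of_pos hC]
    exact Real.continuous_exp.comp (continuous_const.mul continuous_id)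
  have htt : Filter.Tendsto t Filter.atTop (nhds 0) := by
    refine squeeze_zero ht0 htle ?_
    exact tendsto_pow_atTop_nhds_zero_of_lt_one (by norm_num) (by norm_num)
  have hdt : Filter.Tendsto d Filter.atTop (nhds q) := by
    have : d = fun n => q - t n := by funext n; simp [ht]
    rw [this]
    simpa using tendsto_const_nhds.sub htt
  have hlim : Filter.Tendsto (fun n => Ca ^ t n * M ^ d n * Cb ^ t n) Filter.atTop
      (nhds (Ca ^ (0:ℝ) * M ^ q * Cb ^ (0:ℝ))) := by
    exact (((hcont Ca hCa0).continuousAt.tendsto.comp htt).mul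
      ((hcont M hM0).continuousAt.tendsto.comp hdt)).mul
      ((hcont Cb hCb0).continuousAt.tendsto.comp htt)
  simp only [Real.rpow_zero, one_mul, mul_one] at hlim
  exact ge_of_tendsto' hlim hbound

end Key

section Final

variable {H : Type*} [NormedAddCommGroup H] [InnerProductSpace ℂ H] [CompleteSpace H]

local notation "𝔸" => H →L[ℂ] H

lemma cordes {a b : 𝔸} (ha : 0 ≤ a) (hb : 0 ≤ b) {q : ℝ} (hq0 : 0 ≤ q) (hq1 : q ≤ 1) :
    ‖opw a q * opw b q‖ ≤ ‖a * b‖ ^ q := by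
  rcases subsingleton_or_nontrivial H with hH | hH
  · haveI : Subsingleton 𝔸 := ⟨fun f g => ContinuousLinearMap.ext fun x => Subsingleton.elim _ _⟩
    rw [Subsingleton.elim (opw a q * opw b q) 0, norm_zero]
    exact Real.rpow_nonneg (norm_nonneg _) q
  · have hε : ∀ ε : ℝ, 0 < ε → ‖opw a q * opw b q‖ ≤ (‖a * b‖ + ε) ^ q := fun ε hε =>
      cordesM ha hb hq0 hq1 (by positivity) (le_add_of_nonneg_right hε.le)
    have hlim : Filter.Tendsto (fun n : ℕ => (‖a * b‖ + 1 / (n + 1)) ^ q) Filter.atTop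
        (nhds (‖a * b‖ ^ q)) := by
      have h1 : Filter.Tendsto (fun n : ℕ => ‖a * b‖ + 1 / (n + 1 : ℝ)) Filter.atTop
          (nhds (‖a * b‖)) := by
        simpa using tendsto_const_nhds.add (tendsto_one_div_add_atTop_nhds_zero_nat (𝕜 := ℝ))
      exact (Real.continuousAt_rpow_const _ q (Or.inr hq0)).tendsto.comp h1
    exact ge_of_tendsto' hlim fun n => hε _ (by positivity)

end Final


section Main

open ContinuousLinearMap RCLike
open scoped InnerProductSpace NNReal

variable {H : Type*} [NormedAddCommGroup H] [InnerProductSpace ℂ H] [CompleteSpace H]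

local notation "𝔸" => H →L[ℂ] H

lemma aux_isPositive_smul_one {lam : ℝ} (hlam : 0 ≤ lam) :
    ((lam : ℂ) • (1 : 𝔸)).IsPositive := by
  constructor
  · rw [← ContinuousLinearMap.isSelfAdjoint_iff_isSymmetric, IsSelfAdjoint, star_smul, Complex.star_def, Complex.conj_ofReal]
    simp
  · intro x
    rw [reApplyInnerSelf_apply]
    simp only [coe_smul', Pi.smul_apply, one_def, coe_id', id_eq, inner_smul_left, Complex.conj_ofReal]
    have h4 : re ((lam : ℂ) * ⟪x, x⟫_ℂ) = lam * re ⟪x, x⟫_ℂ := by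
      simp [RCLike.re_ofReal_mul]
    rw [h4, inner_self_eq_norm_sq (𝕜 := ℂ)]
    positivity

lemma aux_isUnit {T : 𝔸} (hT : T.IsPositive) {lam : ℝ} (hlam : 0 < lam) :
    IsUnit (T + (lam : ℂ) • 1) := by
  refine isUnit_of_forall_le_norm_inner_map _ (c := ⟨lam, hlam.le⟩) hlam fun x => ?_
  have h1 : ‖x‖ ^ 2 * lam ≤ re ⟪(T + (lam : ℂ) • 1) x, x⟫_ℂ := by
    simp only [add_apply, inner_add_left, map_add, coe_smul', Pi.smul_apply, one_def, coe_id', id_eq,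
      inner_smul_left, Complex.conj_ofReal]
    have h2 : 0 ≤ re ⟪T x, x⟫_ℂ := (Complex.nonneg_iff.mp (hT.inner_nonneg_left x)).1
    have h4 : re ((lam : ℂ) * ⟪x, x⟫_ℂ) = lam * re ⟪x, x⟫_ℂ := by
      simp [RCLike.re_ofReal_mul]
    rw [h4, inner_self_eq_norm_sq (𝕜 := ℂ)]
    nlinarith
  exact h1.trans (RCLike.re_le_norm _)

lemma aux_inv_isPositive {B : 𝔸} (hBpos : B.IsPositive) (hBunit : IsUnit B) :
    (Ring.inverse B).IsPositive := by
  constructor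
  · rw [← ContinuousLinearMap.isSelfAdjoint_iff_isSymmetric, IsSelfAdjoint, ← Ring.inverse_star, hBpos.isSelfAdjoint.star_eq]
  · intro x
    have hx : B ((Ring.inverse B) x) = x := by
      have h := congrArg (fun f : 𝔸 => f x) (Ring.mul_inverse_cancel B hBunit)
      simpa [ContinuousLinearMap.mul_apply] using h
    have h2 := hBpos.inner_nonneg_right ((Ring.inverse B) x)
    rw [reApplyInnerSelf_apply]
    calc (0:ℝ) ≤ re ⟪(Ring.inverse B) x, B ((Ring.inverse B) x)⟫_ℂ := (Complex.nonneg_iff.mp h2).1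
      _ = re ⟪(Ring.inverse B) x, x⟫_ℂ := by rw [hx]

end Main

/-- for self-adjoint non-negative bounded operators `T, S` on a
complex Hilbert space, `λ > 0` and `0 ≤ q ≤ 1`, the operators `T + λI` and
`S + λI` are invertible,
`‖(T + λI)^q ((S + λI)⁻¹)^q‖ ≤ ‖(T + λI)(S + λI)⁻¹‖ ^ q`, and in particular if
`‖(T + λI)(S + λI)⁻¹‖ ≤ 2` then `‖(T + λI)^q (S + λI)^{-q}‖ ≤ 2 ^ q`. -/
theorem stmt_4 {H : Type*} [NormedAddCommGroup H] [InnerProductSpace ℂ H]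
    [CompleteSpace H] (T S : H →L[ℂ] H)
    (hT : T.IsPositive) (hS : S.IsPositive)
    (lam : ℝ) (hlam : 0 < lam) (q : ℝ) (hq0 : 0 ≤ q) (hq1 : q ≤ 1) :
    IsUnit (T + (lam : ℂ) • (1 : H →L[ℂ] H)) ∧
    IsUnit (S + (lam : ℂ) • (1 : H →L[ℂ] H)) ∧
    ‖opPow (T + (lam : ℂ) • 1) q * opPow (Ring.inverse (S + (lam : ℂ) • 1)) q‖
      ≤ ‖(T + (lam : ℂ) • 1) * Ring.inverse (S + (lam : ℂ) • 1)‖ ^ q ∧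
    (‖(T + (lam : ℂ) • 1) * Ring.inverse (S + (lam : ℂ) • 1)‖ ≤ 2 →
      ‖opPow (T + (lam : ℂ) • 1) q * opPow (Ring.inverse (S + (lam : ℂ) • 1)) q‖
        ≤ (2 : ℝ) ^ q) := by
  have hApos : (T + (lam : ℂ) • (1 : H →L[ℂ] H)).IsPositive :=
    hT.add (aux_isPositive_smul_one hlam.le)
  have hBpos : (S + (lam : ℂ) • (1 : H →L[ℂ] H)).IsPositive :=
    hS.add (aux_isPositive_smul_one hlam.le)
  have hAunit := aux_isUnit hT hlam
  have hBunit := aux_isUnit hS hlam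
  have hA0 : (0 : H →L[ℂ] H) ≤ T + (lam : ℂ) • 1 :=
    (ContinuousLinearMap.nonneg_iff_isPositive _).mpr hApos
  have hB0 : (0 : H →L[ℂ] H) ≤ Ring.inverse (S + (lam : ℂ) • 1) :=
    (ContinuousLinearMap.nonneg_iff_isPositive _).mpr (aux_inv_isPositive hBpos hBunit)
  have hkey : ‖opPow (T + (lam : ℂ) • 1) q * opPow (Ring.inverse (S + (lam : ℂ) • 1)) q‖
      ≤ ‖(T + (lam : ℂ) • 1) * Ring.inverse (S + (lam : ℂ) • 1)‖ ^ q :=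
    cordes hA0 hB0 hq0 hq1
  exact ⟨hAunit, hBunit, hkey,
    fun h => hkey.trans (Real.rpow_le_rpow (norm_nonneg _) h hq0)⟩
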